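/- The KL divergence rate between two two-state binary PFSAs g₁ = g_{(μ₁,ν₁)} and g₂ = g_{(μ₂,ν₂)} equals (ν₁ d(μ₁‖μ₂) + (1−μ₁) d(ν₁‖ν₂))/(1−μ₁+ν₁), where d(a‖b) = a log(a/b) + (1−a) log((1−a)/(1−b)) is the binary KL divergence. -/

import Mathlib

open Filter

/-- Stationary distribution of `g_{(μ,ν)}`: symbol `false` ↔ state `s₀`. -/
noncomputable def m2Init (μ ν : ℝ) (b : Bool) : ℝ :=
  if b then (1 - μ) / (1 - μ + ν) else ν / (1 - μ + ν)

/-- Transition/emission probabilities of `g_{(μ,ν)}`. -/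
noncomputable def m2Trans (μ ν : ℝ) (a b : Bool) : ℝ :=
  if a then (if b then 1 - ν else ν) else (if b then 1 - μ else μ)

/-- Probability of emitting the word `l` given that the previous symbol was `a`. -/
noncomputable def m2ChainProb (μ ν : ℝ) : Bool → List Bool → ℝ
  | _, [] => 1
  | a, b :: t => m2Trans μ ν a b * m2ChainProb μ ν b t

/-- Stationary probability `p_g(x)` that `g_{(μ,ν)}` emits the word `x`. -/
noncomputable def m2WordProb (μ ν : ℝ) : List Bool → ℝ
  | [] => 1
  | h :: t => m2Init μ ν h * m2ChainProb μ ν h t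

/-- The binary KL divergence `d(a‖b) = a log(a/b) + (1-a) log((1-a)/(1-b))`. -/
noncomputable def binKL (a b : ℝ) : ℝ :=
  a * Real.log (a / b) + (1 - a) * Real.log ((1 - a) / (1 - b))

/- ### Auxiliary lemmas -/

lemma sum_ofFn_succ (n : ℕ) (f : List Bool → ℝ) :
    ∑ x : Fin (n+1) → Bool, f (List.ofFn x)
      = ∑ b : Bool, ∑ x : Fin n → Bool, f (b :: List.ofFn x) := by
  calc ∑ x : Fin (n+1) → Bool, f (List.ofFn x)
      = ∑ p : Bool × (Fin n → Bool), f (p.1 :: List.ofFn p.2) := by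
        apply Fintype.sum_equiv (Fin.consEquiv (fun _ => Bool)).symm
        intro x
        simp [List.ofFn_succ, Fin.consEquiv]
        rfl
    _ = ∑ b : Bool, ∑ x : Fin n → Bool, f (b :: List.ofFn x) :=
        Fintype.sum_prod_type _

lemma m2Trans_pos {μ ν : ℝ} (hμ : μ ∈ Set.Ioo (0:ℝ) 1) (hν : ν ∈ Set.Ioo (0:ℝ) 1)
    (a b : Bool) : 0 < m2Trans μ ν a b := by
  obtain ⟨h1, h2⟩ := hμ; obtain ⟨h3, h4⟩ := hν
  cases a <;> cases b <;> simp [m2Trans] <;> linarith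

lemma m2ChainProb_pos {μ ν : ℝ} (hμ : μ ∈ Set.Ioo (0:ℝ) 1) (hν : ν ∈ Set.Ioo (0:ℝ) 1)
    (a : Bool) (l : List Bool) : 0 < m2ChainProb μ ν a l := by
  induction l generalizing a with
  | nil => simp [m2ChainProb]
  | cons b t ih => exact mul_pos (m2Trans_pos hμ hν a b) (ih b)

lemma m2Trans_sum (μ ν : ℝ) (a : Bool) : ∑ b : Bool, m2Trans μ ν a b = 1 := by
  cases a <;> simp [m2Trans] <;> ring

lemma m2ChainProb_sum (μ ν : ℝ) (n : ℕ) (a : Bool) :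
    ∑ x : Fin n → Bool, m2ChainProb μ ν a (List.ofFn x) = 1 := by
  induction n generalizing a with
  | zero => simp [m2ChainProb]
  | succ n ih =>
    rw [sum_ofFn_succ n (fun l => m2ChainProb μ ν a l)]
    simp only [m2ChainProb, ← Finset.mul_sum]
    simp only [ih]
    simpa using m2Trans_sum μ ν a

/-- The quantity `G a n = ∑ |x| = n, c₁(a,x) log(c₁(a,x)/c₂(a,x))`. -/
noncomputable def m2G (μ₁ ν₁ μ₂ ν₂ : ℝ) (a : Bool) (n : ℕ) : ℝ :=
  ∑ x : Fin n → Bool, m2ChainProb μ₁ ν₁ a (List.ofFn x) *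
    Real.log (m2ChainProb μ₁ ν₁ a (List.ofFn x) / m2ChainProb μ₂ ν₂ a (List.ofFn x))

/-- One-step transition KL divergence from state `a`. -/
noncomputable def m2d (μ₁ ν₁ μ₂ ν₂ : ℝ) (a : Bool) : ℝ :=
  if a then binKL ν₁ ν₂ else binKL μ₁ μ₂

lemma m2d_eq (μ₁ ν₁ μ₂ ν₂ : ℝ) (a : Bool) :
    m2d μ₁ ν₁ μ₂ ν₂ a
      = ∑ b : Bool, m2Trans μ₁ ν₁ a b * Real.log (m2Trans μ₁ ν₁ a b / m2Trans μ₂ ν₂ a b) := by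
  cases a <;> simp [m2d, m2Trans, binKL] <;> ring

lemma m2G_succ (μ₁ ν₁ μ₂ ν₂ : ℝ)
    (hμ₁ : μ₁ ∈ Set.Ioo (0:ℝ) 1) (hν₁ : ν₁ ∈ Set.Ioo (0:ℝ) 1)
    (hμ₂ : μ₂ ∈ Set.Ioo (0:ℝ) 1) (hν₂ : ν₂ ∈ Set.Ioo (0:ℝ) 1)
    (a : Bool) (n : ℕ) :
    m2G μ₁ ν₁ μ₂ ν₂ a (n+1)
      = m2d μ₁ ν₁ μ₂ ν₂ a + ∑ b : Bool, m2Trans μ₁ ν₁ a b * m2G μ₁ ν₁ μ₂ ν₂ b n := by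
  rw [m2G, sum_ofFn_succ n (fun l => m2ChainProb μ₁ ν₁ a l *
    Real.log (m2ChainProb μ₁ ν₁ a l / m2ChainProb μ₂ ν₂ a l))]
  have key : ∀ b : Bool, ∑ x : Fin n → Bool,
      m2ChainProb μ₁ ν₁ a (b :: List.ofFn x) *
        Real.log (m2ChainProb μ₁ ν₁ a (b :: List.ofFn x) /
          m2ChainProb μ₂ ν₂ a (b :: List.ofFn x))
      = m2Trans μ₁ ν₁ a b * Real.log (m2Trans μ₁ ν₁ a b / m2Trans μ₂ ν₂ a b)
        + m2Trans μ₁ ν₁ a b * m2G μ₁ ν₁ μ₂ ν₂ b n := by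
    intro b
    have hlog : ∀ x : Fin n → Bool,
        Real.log (m2ChainProb μ₁ ν₁ a (b :: List.ofFn x) /
          m2ChainProb μ₂ ν₂ a (b :: List.ofFn x))
        = Real.log (m2Trans μ₁ ν₁ a b / m2Trans μ₂ ν₂ a b)
          + Real.log (m2ChainProb μ₁ ν₁ b (List.ofFn x) /
              m2ChainProb μ₂ ν₂ b (List.ofFn x)) := by
      intro x
      have h1 := m2Trans_pos hμ₁ hν₁ a b
      have h2 := m2Trans_pos hμ₂ hν₂ a b
      have h3 := m2ChainProb_pos hμ₁ hν₁ b (List.ofFn x)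
      have h4 := m2ChainProb_pos hμ₂ hν₂ b (List.ofFn x)
      simp only [m2ChainProb]
      rw [← div_mul_div_comm, Real.log_mul (by positivity) (by positivity)]
    calc ∑ x : Fin n → Bool,
        m2ChainProb μ₁ ν₁ a (b :: List.ofFn x) *
          Real.log (m2ChainProb μ₁ ν₁ a (b :: List.ofFn x) /
            m2ChainProb μ₂ ν₂ a (b :: List.ofFn x))
        = ∑ x : Fin n → Bool,
            ((m2Trans μ₁ ν₁ a b * Real.log (m2Trans μ₁ ν₁ a b / m2Trans μ₂ ν₂ a b)) *
              m2ChainProb μ₁ ν₁ b (List.ofFn x)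
            + m2Trans μ₁ ν₁ a b * (m2ChainProb μ₁ ν₁ b (List.ofFn x) *
              Real.log (m2ChainProb μ₁ ν₁ b (List.ofFn x) /
                m2ChainProb μ₂ ν₂ b (List.ofFn x)))) := by
          apply Finset.sum_congr rfl
          intro x _
          rw [hlog x]
          simp only [m2ChainProb]
          ring
      _ = m2Trans μ₁ ν₁ a b * Real.log (m2Trans μ₁ ν₁ a b / m2Trans μ₂ ν₂ a b)
            + m2Trans μ₁ ν₁ a b * m2G μ₁ ν₁ μ₂ ν₂ b n := by
          rw [Finset.sum_add_distrib, ← Finset.mul_sum, ← Finset.mul_sum,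
            m2ChainProb_sum, mul_one, m2G]
  rw [Finset.sum_congr rfl (fun b _ => key b), Finset.sum_add_distrib, m2d_eq]

lemma m2Init_stationary (μ ν : ℝ) (hμ : μ ∈ Set.Ioo (0:ℝ) 1) (hν : ν ∈ Set.Ioo (0:ℝ) 1)
    (b : Bool) : ∑ a : Bool, m2Init μ ν a * m2Trans μ ν a b = m2Init μ ν b := by
  have hd : (1 : ℝ) - μ + ν > 0 := by nlinarith [hμ.2, hν.1]
  cases b <;> simp [m2Init, m2Trans] <;> field_simp <;> ring

/-- Key identity: `∑ a, init a * G a n = n * D`. -/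
lemma m2H_eq (μ₁ ν₁ μ₂ ν₂ : ℝ)
    (hμ₁ : μ₁ ∈ Set.Ioo (0:ℝ) 1) (hν₁ : ν₁ ∈ Set.Ioo (0:ℝ) 1)
    (hμ₂ : μ₂ ∈ Set.Ioo (0:ℝ) 1) (hν₂ : ν₂ ∈ Set.Ioo (0:ℝ) 1) (n : ℕ) :
    ∑ a : Bool, m2Init μ₁ ν₁ a * m2G μ₁ ν₁ μ₂ ν₂ a n
      = n * ((ν₁ * binKL μ₁ μ₂ + (1 - μ₁) * binKL ν₁ ν₂) / (1 - μ₁ + ν₁)) := by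
  induction n with
  | zero => simp [m2G, m2ChainProb]
  | succ n ih =>
    have hrec : ∀ a, m2G μ₁ ν₁ μ₂ ν₂ a (n+1)
        = m2d μ₁ ν₁ μ₂ ν₂ a + ∑ b : Bool, m2Trans μ₁ ν₁ a b * m2G μ₁ ν₁ μ₂ ν₂ b n :=
      fun a => m2G_succ μ₁ ν₁ μ₂ ν₂ hμ₁ hν₁ hμ₂ hν₂ a n
    have hswap : ∑ a : Bool, m2Init μ₁ ν₁ a *
        ∑ b : Bool, m2Trans μ₁ ν₁ a b * m2G μ₁ ν₁ μ₂ ν₂ b n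
        = ∑ b : Bool, m2Init μ₁ ν₁ b * m2G μ₁ ν₁ μ₂ ν₂ b n := by
      simp only [Finset.mul_sum]
      rw [Finset.sum_comm]
      apply Finset.sum_congr rfl
      intro b _
      have := m2Init_stationary μ₁ ν₁ hμ₁ hν₁ b
      calc ∑ a : Bool, m2Init μ₁ ν₁ a * (m2Trans μ₁ ν₁ a b * m2G μ₁ ν₁ μ₂ ν₂ b n)
          = (∑ a : Bool, m2Init μ₁ ν₁ a * m2Trans μ₁ ν₁ a b) * m2G μ₁ ν₁ μ₂ ν₂ b n := by
            rw [Finset.sum_mul]; apply Finset.sum_congr rfl; intro a _; ring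
        _ = m2Init μ₁ ν₁ b * m2G μ₁ ν₁ μ₂ ν₂ b n := by rw [this]
    have hD : ∑ a : Bool, m2Init μ₁ ν₁ a * m2d μ₁ ν₁ μ₂ ν₂ a
        = (ν₁ * binKL μ₁ μ₂ + (1 - μ₁) * binKL ν₁ ν₂) / (1 - μ₁ + ν₁) := by
      simp [m2Init, m2d]
      ring
    calc ∑ a : Bool, m2Init μ₁ ν₁ a * m2G μ₁ ν₁ μ₂ ν₂ a (n+1)
        = ∑ a : Bool, (m2Init μ₁ ν₁ a * m2d μ₁ ν₁ μ₂ ν₂ a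
            + m2Init μ₁ ν₁ a * ∑ b : Bool, m2Trans μ₁ ν₁ a b * m2G μ₁ ν₁ μ₂ ν₂ b n) := by
          apply Finset.sum_congr rfl; intro a _; rw [hrec a]; ring
      _ = (ν₁ * binKL μ₁ μ₂ + (1 - μ₁) * binKL ν₁ ν₂) / (1 - μ₁ + ν₁)
            + ∑ b : Bool, m2Init μ₁ ν₁ b * m2G μ₁ ν₁ μ₂ ν₂ b n := by
          rw [Finset.sum_add_distrib, hD, hswap]
      _ = (n+1 : ℕ) * ((ν₁ * binKL μ₁ μ₂ + (1 - μ₁) * binKL ν₁ ν₂) / (1 - μ₁ + ν₁)) := by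
          rw [ih]; push_cast; ring

lemma m2Init_pos {μ ν : ℝ} (hμ : μ ∈ Set.Ioo (0:ℝ) 1) (hν : ν ∈ Set.Ioo (0:ℝ) 1)
    (b : Bool) : 0 < m2Init μ ν b := by
  have hd : (0:ℝ) < 1 - μ + ν := by nlinarith [hμ.2, hν.1]
  cases b <;> simp [m2Init] <;> [exact div_pos hν.1 hd; exact div_pos (by linarith [hμ.2]) hd]

/-- Exact value of the length-`(n+1)` KL sum. -/
lemma m2F_eq (μ₁ ν₁ μ₂ ν₂ : ℝ)
    (hμ₁ : μ₁ ∈ Set.Ioo (0:ℝ) 1) (hν₁ : ν₁ ∈ Set.Ioo (0:ℝ) 1)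
    (hμ₂ : μ₂ ∈ Set.Ioo (0:ℝ) 1) (hν₂ : ν₂ ∈ Set.Ioo (0:ℝ) 1) (n : ℕ) :
    (∑ x : Fin (n+1) → Bool,
        m2WordProb μ₁ ν₁ (List.ofFn x) *
          Real.log (m2WordProb μ₁ ν₁ (List.ofFn x) / m2WordProb μ₂ ν₂ (List.ofFn x)))
      = (∑ a : Bool, m2Init μ₁ ν₁ a * Real.log (m2Init μ₁ ν₁ a / m2Init μ₂ ν₂ a))
        + n * ((ν₁ * binKL μ₁ μ₂ + (1 - μ₁) * binKL ν₁ ν₂) / (1 - μ₁ + ν₁)) := by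
  rw [sum_ofFn_succ n (fun l => m2WordProb μ₁ ν₁ l *
    Real.log (m2WordProb μ₁ ν₁ l / m2WordProb μ₂ ν₂ l))]
  have key : ∀ a : Bool, ∑ x : Fin n → Bool,
      m2WordProb μ₁ ν₁ (a :: List.ofFn x) *
        Real.log (m2WordProb μ₁ ν₁ (a :: List.ofFn x) / m2WordProb μ₂ ν₂ (a :: List.ofFn x))
      = m2Init μ₁ ν₁ a * Real.log (m2Init μ₁ ν₁ a / m2Init μ₂ ν₂ a)
        + m2Init μ₁ ν₁ a * m2G μ₁ ν₁ μ₂ ν₂ a n := by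
    intro a
    have h1 := m2Init_pos hμ₁ hν₁ a
    have h2 := m2Init_pos hμ₂ hν₂ a
    calc ∑ x : Fin n → Bool,
        m2WordProb μ₁ ν₁ (a :: List.ofFn x) *
          Real.log (m2WordProb μ₁ ν₁ (a :: List.ofFn x) / m2WordProb μ₂ ν₂ (a :: List.ofFn x))
        = ∑ x : Fin n → Bool,
            ((m2Init μ₁ ν₁ a * Real.log (m2Init μ₁ ν₁ a / m2Init μ₂ ν₂ a)) *
              m2ChainProb μ₁ ν₁ a (List.ofFn x)
            + m2Init μ₁ ν₁ a * (m2ChainProb μ₁ ν₁ a (List.ofFn x) *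
              Real.log (m2ChainProb μ₁ ν₁ a (List.ofFn x) /
                m2ChainProb μ₂ ν₂ a (List.ofFn x)))) := by
          apply Finset.sum_congr rfl
          intro x _
          have h3 := m2ChainProb_pos hμ₁ hν₁ a (List.ofFn x)
          have h4 := m2ChainProb_pos hμ₂ hν₂ a (List.ofFn x)
          simp only [m2WordProb]
          rw [← div_mul_div_comm, Real.log_mul (by positivity) (by positivity)]
          ring
      _ = m2Init μ₁ ν₁ a * Real.log (m2Init μ₁ ν₁ a / m2Init μ₂ ν₂ a)
            + m2Init μ₁ ν₁ a * m2G μ₁ ν₁ μ₂ ν₂ a n := by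
          rw [Finset.sum_add_distrib, ← Finset.mul_sum, ← Finset.mul_sum,
            m2ChainProb_sum, mul_one, m2G]
  rw [Finset.sum_congr rfl (fun a _ => key a), Finset.sum_add_distrib,
    m2H_eq μ₁ ν₁ μ₂ ν₂ hμ₁ hν₁ hμ₂ hν₂ n]

/-- The KL divergence rate between the two-state binary PFSAs `g_{(μ₁,ν₁)}` and
`g_{(μ₂,ν₂)}` equals `(ν₁ d(μ₁‖μ₂) + (1-μ₁) d(ν₁‖ν₂))/(1-μ₁+ν₁)`. -/
theorem stmt_11 (μ₁ ν₁ μ₂ ν₂ : ℝ)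
    (hμ₁ : μ₁ ∈ Set.Ioo (0 : ℝ) 1) (hν₁ : ν₁ ∈ Set.Ioo (0 : ℝ) 1)
    (hμ₂ : μ₂ ∈ Set.Ioo (0 : ℝ) 1) (hν₂ : ν₂ ∈ Set.Ioo (0 : ℝ) 1) :
    Tendsto
      (fun n : ℕ =>
        (∑ x : Fin n → Bool,
            m2WordProb μ₁ ν₁ (List.ofFn x) *
              Real.log (m2WordProb μ₁ ν₁ (List.ofFn x) / m2WordProb μ₂ ν₂ (List.ofFn x))) / n)
      atTop
      (nhds ((ν₁ * binKL μ₁ μ₂ + (1 - μ₁) * binKL ν₁ ν₂) / (1 - μ₁ + ν₁))) := by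
  set A : ℝ := ∑ a : Bool, m2Init μ₁ ν₁ a * Real.log (m2Init μ₁ ν₁ a / m2Init μ₂ ν₂ a) with hA
  set D : ℝ := (ν₁ * binKL μ₁ μ₂ + (1 - μ₁) * binKL ν₁ ν₂) / (1 - μ₁ + ν₁) with hD
  have hlim : Tendsto (fun n : ℕ => (A - D) * (n : ℝ)⁻¹ + D) atTop (nhds D) := by
    have h1 : Tendsto (fun n : ℕ => ((n : ℝ))⁻¹) atTop (nhds 0) :=
      tendsto_inv_atTop_nhds_zero_nat
    have := (h1.const_mul (A - D)).add_const D
    simpa using this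
  refine hlim.congr' ?_
  filter_upwards [eventually_ge_atTop 1] with n hn
  obtain ⟨m, rfl⟩ : ∃ m, n = m + 1 := ⟨n - 1, by omega⟩
  rw [m2F_eq μ₁ ν₁ μ₂ ν₂ hμ₁ hν₁ hμ₂ hν₂ m, ← hA, ← hD]
  clear_value A D
  have hne : ((m + 1 : ℕ) : ℝ) ≠ 0 := by positivity
  rw [eq_div_iff hne]
  push_cast
  field_simp
  ring
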